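/- arXiv:1502.06360 — 2 statements merged into one kernel-verified Lean document; each statement's English description precedes it below -/
import Mathlib

section
/- If p ⊑_p2p q, p ⇓p2p s, and q ⟹^s q' (for s ∈ Act*), then q' ⇓. -/
namespace MTP

/-- Processes of infinitary CCS with success.
`pre none p` is `τ.p`, `pre (some a) p` is `a.p`.
`sum f` is a countable sum `Σ_{i∈I} p_i` where `I = {n | f n ≠ none}`. -/
inductive Proc (Act : Type) (Const : Type) : Type where
  | one : Proc Act Const
  | const : Const → Proc Act Const
  | pre : Option Act → Proc Act Const → Proc Act Const
  | sum : (ℕ → Option (Proc Act Const)) → Proc Act Const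

namespace Proc
/-- The empty sum `0`. -/
def nil {Act Const : Type} : Proc Act Const := .sum fun _ => none
/-- Binary external sum `p + q`. -/
def ext {Act Const : Type} (p q : Proc Act Const) : Proc Act Const :=
  .sum fun n => if n = 0 then some p else if n = 1 then some q else none
end Proc

/-- Labels: visible actions, τ, and the success action ✓. -/
inductive Label (Act : Type) : Type where
  | act : Act → Label Act
  | tau : Label Act
  | ok : Label Act

/-- A CCS signature: an involutive complementation on actions, together with
a definition for every constant. -/
structure CCS (Act : Type) (Const : Type) : Type where
  co : Act → Act
  co_invol : ∀ a, co (co a) = a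
  defn : Const → Proc Act Const

variable {Act Const : Type}

/-- The transition relation of infinitary CCS with success. -/
inductive Step (S : CCS Act Const) : Proc Act Const → Label Act → Proc Act Const → Prop where
  | one : Step S .one .ok .nil
  | preAct (a : Act) (p : Proc Act Const) : Step S (.pre (some a) p) (.act a) p
  | preTau (p : Proc Act Const) : Step S (.pre none p) .tau p
  | sum {f : ℕ → Option (Proc Act Const)} {i : ℕ} {p q : Proc Act Const} {l : Label Act} :
      f i = some p → Step S p l q → Step S (.sum f) l q
  | const {A : Const} {l : Label Act} {q : Proc Act Const} :
      Step S (S.defn A) l q → Step S (.const A) l q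

/-- `p` can report success. -/
def CanOk (S : CCS Act Const) (p : Proc Act Const) : Prop := ∃ q, Step S p .ok q

/-- `p` has no τ-transition. -/
def Stable (S : CCS Act Const) (p : Proc Act Const) : Prop := ¬ ∃ q, Step S p .tau q

/-- τ-transitions of a parallel composition `p ∥ r` (server component first). -/
inductive ParTau (S : CCS Act Const) :
    Proc Act Const × Proc Act Const → Proc Act Const × Proc Act Const → Prop where
  | left {p p' r : Proc Act Const} : Step S p .tau p' → ParTau S (p, r) (p', r)
  | right {p r r' : Proc Act Const} : Step S r .tau r' → ParTau S (p, r) (p, r')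
  | sync {p p' r r' : Proc Act Const} {a : Act} :
      Step S p (.act a) p' → Step S r (.act (S.co a)) r' → ParTau S (p, r) (p', r')

/-- A state of a composition is stuck if it has no τ-transition. -/
def StateStuck (S : CCS Act Const) (st : Proc Act Const × Proc Act Const) : Prop :=
  ¬ ∃ t, ParTau S st t

/-- `ρ` encodes a maximal computation: at each stage either a real τ-step is taken, or the
state is stuck and stutters forever (encoding a finite maximal computation). -/
def MaxComp (S : CCS Act Const) (ρ : ℕ → Proc Act Const × Proc Act Const) : Prop :=
  ∀ k, ParTau S (ρ k) (ρ (k + 1)) ∨ (StateStuck S (ρ k) ∧ ρ (k + 1) = ρ k)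

/-- `p Must r`: every maximal computation of `p ∥ r` is client-successful. -/
def Must (S : CCS Act Const) (p r : Proc Act Const) : Prop :=
  ∀ ρ : ℕ → Proc Act Const × Proc Act Const,
    ρ 0 = (p, r) → MaxComp S ρ → ∃ k, CanOk S (ρ k).2

/-- `p MustSC r`: every maximal computation of `p ∥ r` is successful (both components
eventually can report success). -/
def MustSC (S : CCS Act Const) (p r : Proc Act Const) : Prop :=
  ∀ ρ : ℕ → Proc Act Const × Proc Act Const,
    ρ 0 = (p, r) → MaxComp S ρ → (∃ k, CanOk S (ρ k).2) ∧ (∃ l, CanOk S (ρ l).1)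

/-- The server testing preorder `p ⊑_svr q`. -/
def svrLe (S : CCS Act Const) (p q : Proc Act Const) : Prop :=
  ∀ r, Must S p r → Must S q r

/-- The client testing preorder `r₁ ⊑_clt r₂`. -/
def cltLe (S : CCS Act Const) (r₁ r₂ : Proc Act Const) : Prop :=
  ∀ p, Must S p r₁ → Must S p r₂

/-- The peer testing preorder `p ⊑_p2p q`. -/
def p2pLe (S : CCS Act Const) (p q : Proc Act Const) : Prop :=
  ∀ r, MustSC S p r → MustSC S q r

/-- Weak transition `p ⟹^s q` for finite traces `s ∈ Act*`. -/
inductive Weak (S : CCS Act Const) : Proc Act Const → List Act → Proc Act Const → Prop where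
  | refl (p : Proc Act Const) : Weak S p [] p
  | tau {p p' q : Proc Act Const} {s : List Act} :
      Step S p .tau p' → Weak S p' s q → Weak S p s q
  | act {p p' q : Proc Act Const} {a : Act} {s : List Act} :
      Step S p (.act a) p' → Weak S p' s q → Weak S p (a :: s) q

/-- Unsuccessful weak transition `p ⟹̸✓^s q`: as `Weak` but no state passed through
(including the end points) can report success. -/
inductive UWeak (S : CCS Act Const) : Proc Act Const → List Act → Proc Act Const → Prop where
  | refl {p : Proc Act Const} : ¬ CanOk S p → UWeak S p [] p
  | tau {p p' q : Proc Act Const} {s : List Act} :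
      ¬ CanOk S p → Step S p .tau p' → UWeak S p' s q → UWeak S p s q
  | act {p p' q : Proc Act Const} {a : Act} {s : List Act} :
      ¬ CanOk S p → Step S p (.act a) p' → UWeak S p' s q → UWeak S p (a :: s) q

/-- View `Option Act` (`none` = τ) as a label. -/
def optLabel : Option Act → Label Act
  | some a => .act a
  | none => .tau

/-- The length-`n` prefix of an infinite trace `u ∈ Act^∞`. -/
def prefixList (u : ℕ → Act) (n : ℕ) : List Act := List.ofFn fun i : Fin n => u i.1

/-- Infinite weak transition `p ⟹^u` for `u ∈ Act^∞`. -/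
def InfWeak (S : CCS Act Const) (p : Proc Act Const) (u : ℕ → Act) : Prop :=
  ∃ (ρ : ℕ → Proc Act Const) (ℓ : ℕ → Option Act),
    ρ 0 = p ∧ (∀ k, Step S (ρ k) (optLabel (ℓ k)) (ρ (k + 1))) ∧
    ∀ n, ∃ k, (List.range k).filterMap ℓ = prefixList u n

/-- Infinite unsuccessful weak transition `p ⟹̸✓^u` for `u ∈ Act^∞`. -/
def InfUWeak (S : CCS Act Const) (p : Proc Act Const) (u : ℕ → Act) : Prop :=
  ∃ (ρ : ℕ → Proc Act Const) (ℓ : ℕ → Option Act),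
    ρ 0 = p ∧ (∀ k, Step S (ρ k) (optLabel (ℓ k)) (ρ (k + 1))) ∧
    (∀ k, ¬ CanOk S (ρ k)) ∧
    ∀ n, ∃ k, (List.range k).filterMap ℓ = prefixList u n

/-- `p ⇓`: no infinite sequence of τ-transitions from `p`. -/
def Conv (S : CCS Act Const) (p : Proc Act Const) : Prop :=
  ¬ ∃ ρ : ℕ → Proc Act Const, ρ 0 = p ∧ ∀ k, Step S (ρ k) .tau (ρ (k + 1))

/-- `p after s`. -/
def after (S : CCS Act Const) (p : Proc Act Const) (s : List Act) : Set (Proc Act Const) :=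
  {q | Weak S p s q}

/-- `p afterU s`: residuals after unsuccessful traces. -/
def afterU (S : CCS Act Const) (p : Proc Act Const) (s : List Act) : Set (Proc Act Const) :=
  {q | UWeak S p s q}

-- `⊕X = Σ_{x∈X} τ.x` for a nonempty countable set `X` (junk value otherwise).
open scoped Classical in
noncomputable def bigOplus (X : Set (Proc Act Const)) : Proc Act Const :=
  if h : ∃ f : ℕ → Proc Act Const, Set.range f = X then
    Proc.sum fun n => some (.pre none (h.choose n))
  else Proc.nil

/-- The ready set `S(q)`. -/
def ready (S : CCS Act Const) (q : Proc Act Const) : Set Act :=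
  {a | ∃ q', Step S q (.act a) q'}

/-- The acceptance set `A(p, s)`. -/
def acc (S : CCS Act Const) (p : Proc Act Const) (s : List Act) : Set (Set Act) :=
  {A | ∃ q, Weak S p s q ∧ Stable S q ∧ A = ready S q}

/-- The unsuccessful acceptance set `A✗(p, s)`. -/
def accU (S : CCS Act Const) (p : Proc Act Const) (s : List Act) : Set (Set Act) :=
  {A | ∃ q, UWeak S p s q ∧ Stable S q ∧ A = ready S q}

/-- The usable clients. -/
def Uclt (S : CCS Act Const) : Set (Proc Act Const) := {r | ∃ p, Must S p r}

/-- The usable servers. -/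
def Usvr (S : CCS Act Const) : Set (Proc Act Const) := {p | ∃ r, Must S p r}

/-- Client usability along an unsuccessful trace: `r ⇓U s`. -/
def usbU (S : CCS Act Const) : Proc Act Const → List Act → Prop
  | r, [] => r ∈ Uclt S
  | r, a :: s => r ∈ Uclt S ∧ ((∃ q, UWeak S r [a] q) → usbU S (bigOplus (afterU S r [a])) s)

/-- Client usability along an infinite trace. -/
def usbUInf (S : CCS Act Const) (r : Proc Act Const) (u : ℕ → Act) : Prop :=
  ∀ n, usbU S r (prefixList u n)

/-- Usable actions of a client after `s`: `uaU(r, s)`. -/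
def uaU (S : CCS Act Const) (r : Proc Act Const) (s : List Act) : Set Act :=
  {a | (∃ q, UWeak S r (s ++ [a]) q) → usbU S r (s ++ [a])}

/-- Convergence along a trace: `p ⇓ s`. -/
def convAlong (S : CCS Act Const) : Proc Act Const → List Act → Prop
  | p, [] => Conv S p
  | p, a :: s => Conv S p ∧ ((∃ q, Weak S p [a] q) → convAlong S (bigOplus (after S p [a])) s)

/-- Server usability along a trace: `p ⇓U' s`. -/
def usbS (S : CCS Act Const) : Proc Act Const → List Act → Prop
  | p, [] => p ∈ Usvr S
  | p, a :: s => p ∈ Usvr S ∧ ((∃ q, Weak S p [a] q) → usbS S (bigOplus (after S p [a])) s)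

/-- Server convergence `p ⇓svr s`. -/
def convS (S : CCS Act Const) (p : Proc Act Const) (s : List Act) : Prop :=
  convAlong S p s ∧ usbS S p s

/-- Server convergence along an infinite trace. -/
def convSInf (S : CCS Act Const) (p : Proc Act Const) (u : ℕ → Act) : Prop :=
  ∀ n, convS S p (prefixList u n)

/-- Usable actions of a server after `s`: `uaS(p, s)`. -/
def uaS (S : CCS Act Const) (p : Proc Act Const) (s : List Act) : Set Act :=
  {a | (∃ q, Weak S p s q) → usbS S p (s ++ [a])}

/-- Peer convergence `p ⇓p2p s`. -/
def convP (S : CCS Act Const) (p : Proc Act Const) (s : List Act) : Prop :=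
  convAlong S p s ∧ usbU S p s

/-- Peer convergence along an infinite trace. -/
def convPInf (S : CCS Act Const) (p : Proc Act Const) (u : ℕ → Act) : Prop :=
  ∀ n, convP S p (prefixList u n)

/-- The semantic client preorder `r₁ ≼_clt r₂`. -/
def semClt (S : CCS Act Const) (r₁ r₂ : Proc Act Const) : Prop :=
  (∀ s : List Act, usbU S r₁ s →
    usbU S r₂ s ∧ ∀ B ∈ accU S r₂ s, ∃ A ∈ accU S r₁ s, A ∩ uaU S r₁ s ⊆ B) ∧
  (∀ s : List Act, usbU S r₁ s → (∃ q, UWeak S r₂ s q) → ∃ q, UWeak S r₁ s q) ∧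
  (∀ u : ℕ → Act, usbUInf S r₁ u → InfUWeak S r₂ u → InfUWeak S r₁ u)

/-- The semantic server preorder `p ≼_svr q`. -/
def semSvr (S : CCS Act Const) (p q : Proc Act Const) : Prop :=
  (∀ s : List Act, convS S p s →
    convS S q s ∧ ∀ B ∈ acc S q s, ∃ A ∈ acc S p s, A ∩ uaS S p s ⊆ B) ∧
  (∀ s : List Act, convS S p s → (∃ q', Weak S q s q') → ∃ p', Weak S p s p') ∧
  (∀ u : ℕ → Act, convSInf S p u → InfWeak S q u → InfWeak S p u)

/-- The auxiliary semantic peer relation `p ≼'_p2p q`. -/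
def semP2pAux (S : CCS Act Const) (p q : Proc Act Const) : Prop :=
  (∀ s : List Act, convP S p s →
    convAlong S q s ∧ ∀ B ∈ acc S q s, ∃ A ∈ acc S p s, A ∩ uaU S p s ⊆ B) ∧
  (∀ s : List Act, convP S p s → (∃ q', Weak S q s q') → ∃ p', Weak S p s p') ∧
  (∀ u : ℕ → Act, convPInf S p u → InfWeak S q u → InfWeak S p u)

/-- The semantic peer preorder `p ≼_p2p q`. -/
def semP2p (S : CCS Act Const) (p q : Proc Act Const) : Prop :=
  semClt S p q ∧ semP2pAux S p q

end MTP


namespace MTP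

variable {Act Const : Type}

/-! ### Basic step inversion -/

lemma step_one_inv {S : CCS Act Const} {l z} (h : Step S .one l z) :
    l = .ok ∧ z = Proc.nil := by cases h; exact ⟨rfl, rfl⟩

lemma step_pre_none_inv {S : CCS Act Const} {x l z} (h : Step S (.pre none x) l z) :
    l = .tau ∧ z = x := by cases h; exact ⟨rfl, rfl⟩

lemma step_pre_some_inv {S : CCS Act Const} {a x l z} (h : Step S (.pre (some a) x) l z) :
    l = .act a ∧ z = x := by cases h; exact ⟨rfl, rfl⟩

lemma step_ext_iff {S : CCS Act Const} {a b : Proc Act Const} {l z} :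
    Step S (Proc.ext a b) l z ↔ Step S a l z ∨ Step S b l z := by
  constructor
  · intro h
    cases h with
    | sum hf hs =>
      rename_i i pp
      by_cases e0 : i = 0
      · subst e0; simp only at hf
        injection hf with hf; subst hf; exact Or.inl hs
      · by_cases e1 : i = 1
        · subst e1; simp only [e0] at hf
          simp at hf; subst hf; exact Or.inr hs
        · simp [e0, e1] at hf
  · intro h
    rcases h with h | h
    · exact Step.sum (f := fun n => if n = 0 then some a else if n = 1 then some b else none)
        (i := 0) (by simp) h
    · exact Step.sum (f := fun n => if n = 0 then some a else if n = 1 then some b else none)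
        (i := 1) (by simp) h

end MTP

namespace MTP

variable {Act Const : Type}

/-! ### Countability of reachable sets -/

def ddecode (S : CCS Act Const) : ℕ → Proc Act Const → List ℕ →
    Option (Label Act × Proc Act Const)
  | 0, _, _ => none
  | n+1, p, cs =>
    match p, cs with
    | .one, [] => some (.ok, .nil)
    | .pre (some a) p', [] => some (.act a, p')
    | .pre none p', [] => some (.tau, p')
    | .sum f, i :: cs' =>
      match f i with
      | some x => ddecode S n x cs'
      | none => none
    | .const A, cs => ddecode S n (S.defn A) cs
    | _, _ => none

lemma step_ddecode {S : CCS Act Const} {p l q} (h : Step S p l q) :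
    ∃ n cs, ddecode S n p cs = some (l, q) := by
  induction h with
  | one => exact ⟨1, [], rfl⟩
  | preAct a p => exact ⟨1, [], rfl⟩
  | preTau p => exact ⟨1, [], rfl⟩
  | sum hf _ ih =>
    obtain ⟨n, cs, hd⟩ := ih
    rename_i f i _ _ _ _
    exact ⟨n + 1, i :: cs, by simp [ddecode, hf, hd]⟩
  | const _ ih =>
    obtain ⟨n, cs, hd⟩ := ih
    exact ⟨n + 1, cs, by simp [ddecode, hd]⟩

def wdecode (S : CCS Act Const) : Proc Act Const → List (ℕ × List ℕ) → Option (Proc Act Const)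
  | p, [] => some p
  | p, c :: cs =>
    match ddecode S c.1 p c.2 with
    | some (_, q) => wdecode S q cs
    | none => none

lemma weak_wdecode {S : CCS Act Const} {p s q} (h : Weak S p s q) :
    ∃ codes, wdecode S p codes = some q := by
  induction h with
  | refl p => exact ⟨[], rfl⟩
  | tau hstep _ ih =>
    obtain ⟨n, cs, hd⟩ := step_ddecode hstep
    obtain ⟨codes, hc⟩ := ih
    exact ⟨(n, cs) :: codes, by simp [wdecode, hd, hc]⟩
  | act hstep _ ih =>
    obtain ⟨n, cs, hd⟩ := step_ddecode hstep
    obtain ⟨codes, hc⟩ := ih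
    exact ⟨(n, cs) :: codes, by simp [wdecode, hd, hc]⟩

lemma uweak_weak {S : CCS Act Const} {p s q} (h : UWeak S p s q) : Weak S p s q := by
  induction h with
  | refl _ => exact .refl _
  | tau _ hstep _ ih => exact .tau hstep ih
  | act _ hstep _ ih => exact .act hstep ih

lemma countable_after (S : CCS Act Const) (p : Proc Act Const) (s : List Act) :
    (after S p s).Countable := by
  have hsub : after S p s ⊆
      Set.range (fun cs : List (ℕ × List ℕ) => (wdecode S p cs).getD p) := by
    intro y hy
    obtain ⟨cs, h⟩ := weak_wdecode hy
    exact ⟨cs, by simp [h]⟩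
  exact Set.Countable.mono hsub (Set.countable_range _)

lemma repr_after {S : CCS Act Const} {Q : Proc Act Const} {u : List Act} {y : Proc Act Const}
    (hy : y ∈ after S Q u) :
    ∃ f : ℕ → Proc Act Const, Set.range f = after S Q u := by
  obtain ⟨f, hf⟩ := Set.Countable.exists_eq_range (countable_after S Q u) ⟨y, hy⟩
  exact ⟨f, hf.symm⟩

lemma repr_afterU {S : CCS Act Const} {P : Proc Act Const} {u : List Act} {y : Proc Act Const}
    (hy : y ∈ afterU S P u) :
    ∃ f : ℕ → Proc Act Const, Set.range f = afterU S P u := by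
  have hc : (afterU S P u).Countable :=
    Set.Countable.mono (fun z hz => uweak_weak hz) (countable_after S P u)
  obtain ⟨f, hf⟩ := Set.Countable.exists_eq_range hc ⟨y, hy⟩
  exact ⟨f, hf.symm⟩

end MTP

namespace MTP

variable {Act Const : Type}

/-! ### bigOplus -/

lemma bigOplus_no_ok (S : CCS Act Const) (X : Set (Proc Act Const)) :
    ¬ CanOk S (bigOplus X) := by
  rintro ⟨z, hz⟩
  unfold bigOplus at hz
  split at hz
  · cases hz with
    | sum hf hs =>
      injection hf with hf; subst hf
      exact absurd (step_pre_none_inv hs).1 (by simp)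
  · cases hz with
    | sum hf hs => exact absurd hf (by simp [Proc.nil] at *)

lemma bigOplus_step_mem {S : CCS Act Const} {X : Set (Proc Act Const)}
    (hX : ∃ f : ℕ → Proc Act Const, Set.range f = X) {y : Proc Act Const} (hy : y ∈ X) :
    Step S (bigOplus X) .tau y := by
  rw [bigOplus, dif_pos hX]
  have hrange := hX.choose_spec
  rw [← hrange] at hy
  obtain ⟨n, hn⟩ := hy
  exact Step.sum (i := n) rfl (hn ▸ Step.preTau _)

/-! ### The test process -/

open scoped Classical in
noncomputable def escw (S : CCS Act Const) (P : Proc Act Const) : Proc Act Const :=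
  if h : P ∈ Uclt S then h.choose else Proc.nil

noncomputable def esc (S : CCS Act Const) (P : Proc Act Const) : Proc Act Const :=
  Proc.ext .one (escw S P)

lemma escw_must {S : CCS Act Const} {P : Proc Act Const} (h : P ∈ Uclt S) :
    Must S (escw S P) P := by
  rw [escw, dif_pos h]; exact h.choose_spec

lemma canok_esc (S : CCS Act Const) (P : Proc Act Const) : CanOk S (esc S P) :=
  ⟨Proc.nil, step_ext_iff.mpr (Or.inl Step.one)⟩

noncomputable def testC (S : CCS Act Const) : Proc Act Const → List Act → Proc Act Const
  | P, [] => .pre none (esc S P)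
  | P, a :: t =>
    Proc.ext (.pre none (esc S P))
      (.pre (some (S.co a)) (testC S (bigOplus (afterU S P [a])) t))

lemma test_no_ok (S : CCS Act Const) (P : Proc Act Const) (s : List Act) :
    ¬ CanOk S (testC S P s) := by
  rintro ⟨z, hz⟩
  cases s with
  | nil => exact absurd (step_pre_none_inv hz).1 (by simp)
  | cons a t =>
    rcases step_ext_iff.mp hz with h | h
    · exact absurd (step_pre_none_inv h).1 (by simp)
    · exact absurd (step_pre_some_inv h).1 (by simp)

lemma test_has_tau (S : CCS Act Const) (P : Proc Act Const) (s : List Act) :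
    Step S (testC S P s) .tau (esc S P) := by
  cases s with
  | nil => exact Step.preTau _
  | cons a t => exact step_ext_iff.mpr (Or.inl (Step.preTau _))

lemma test_tau_inv {S : CCS Act Const} {P : Proc Act Const} {s : List Act} {z}
    (h : Step S (testC S P s) .tau z) : z = esc S P := by
  cases s with
  | nil => exact (step_pre_none_inv h).2
  | cons a t =>
    rcases step_ext_iff.mp h with h | h
    · exact (step_pre_none_inv h).2
    · exact absurd (step_pre_some_inv h).1 (by simp)

lemma test_act_inv {S : CCS Act Const} {P : Proc Act Const} {s : List Act} {b z}
    (h : Step S (testC S P s) (.act b) z) :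
    ∃ a t, s = a :: t ∧ b = S.co a ∧ z = testC S (bigOplus (afterU S P [a])) t := by
  cases s with
  | nil => exact absurd (step_pre_none_inv h).1 (by simp)
  | cons a t =>
    rcases step_ext_iff.mp h with h | h
    · exact absurd (step_pre_none_inv h).1 (by simp)
    · obtain ⟨h1, h2⟩ := step_pre_some_inv h
      injection h1 with h1
      exact ⟨a, t, rfl, h1, h2⟩

lemma test_act_intro (S : CCS Act Const) (P : Proc Act Const) (a : Act) (t : List Act) :
    Step S (testC S P (a :: t)) (.act (S.co a)) (testC S (bigOplus (afterU S P [a])) t) :=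
  step_ext_iff.mpr (Or.inr (Step.preAct _ _))

end MTP

namespace MTP

variable {Act Const : Type}

/-! ### Weak / UWeak extension lemmas -/

lemma weak_snoc_tau {S : CCS Act Const} {Q x y : Proc Act Const} {u : List Act}
    (h : Weak S Q u x) (hs : Step S x .tau y) : Weak S Q u y := by
  induction h with
  | refl p => exact .tau hs (.refl _)
  | tau h1 _ ih => exact .tau h1 (ih hs)
  | act h1 _ ih => exact .act h1 (ih hs)

lemma weak_snoc_act {S : CCS Act Const} {Q x y : Proc Act Const} {u : List Act} {a : Act}
    (h : Weak S Q u x) (hs : Step S x (.act a) y) : Weak S Q (u ++ [a]) y := by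
  induction h with
  | refl p => exact .act hs (.refl _)
  | tau h1 _ ih => exact .tau h1 (ih hs)
  | act h1 _ ih => exact .act h1 (ih hs)

lemma uweak_snoc_tau {S : CCS Act Const} {P x y : Proc Act Const} {u : List Act}
    (h : UWeak S P u x) (hs : Step S x .tau y) (hy : ¬ CanOk S y) : UWeak S P u y := by
  induction h with
  | refl hx => exact .tau hx hs (.refl hy)
  | tau hx h1 _ ih => exact .tau hx h1 (ih hs)
  | act hx h1 _ ih => exact .act hx h1 (ih hs)

lemma uweak_snoc_act {S : CCS Act Const} {P x y : Proc Act Const} {u : List Act} {a : Act}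
    (h : UWeak S P u x) (hs : Step S x (.act a) y) (hy : ¬ CanOk S y) :
    UWeak S P (u ++ [a]) y := by
  induction h with
  | refl hx => exact .act hx hs (.refl hy)
  | tau hx h1 _ ih => exact .tau hx h1 (ih hs)
  | act hx h1 _ ih => exact .act hx h1 (ih hs)

lemma uweak_nil_path' {S : CCS Act Const} {P p'' : Proc Act Const} {u : List Act}
    (h : UWeak S P u p'') (hu : u = []) :
    ∃ (M : ℕ) (x : ℕ → Proc Act Const), x 0 = P ∧ x M = p'' ∧
      (∀ i < M, Step S (x i) .tau (x (i+1))) ∧ (∀ i ≤ M, ¬ CanOk S (x i)) := by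
  induction h with
  | refl hx =>
    rename_i pp
    exact ⟨0, fun _ => pp, rfl, rfl, fun i hi => absurd hi (by omega), fun i _ => hx⟩
  | tau hx h1 h2 ih =>
    rename_i pp pp' qq ss
    obtain ⟨M, x, hx0, hxM, hst, hnok⟩ := ih hu
    refine ⟨M + 1, fun i => Nat.casesOn i pp x, rfl, hxM, ?_, ?_⟩
    · intro i hi
      cases i with
      | zero => simpa [hx0] using h1
      | succ j => exact hst j (by omega)
    · intro i _
      cases i with
      | zero => exact hx
      | succ j => exact hnok j (by omega)
  | act _ _ _ _ => simp at hu

lemma uweak_nil_path {S : CCS Act Const} {P p'' : Proc Act Const}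
    (h : UWeak S P [] p'') :
    ∃ (M : ℕ) (x : ℕ → Proc Act Const), x 0 = P ∧ x M = p'' ∧
      (∀ i < M, Step S (x i) .tau (x (i+1))) ∧ (∀ i ≤ M, ¬ CanOk S (x i)) :=
  uweak_nil_path' h rfl

/-! ### Convergence and accessibility -/

lemma conv_acc {S : CCS Act Const} {p : Proc Act Const} (h : Conv S p) :
    Acc (fun y x => Step S x .tau y) p := by
  by_contra hacc
  apply h
  have key : ∀ x : Proc Act Const, ¬ Acc (fun y x => Step S x .tau y) x →
      ∃ y, Step S x .tau y ∧ ¬ Acc (fun y x => Step S x .tau y) y := by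
    intro x hx
    by_contra hno
    push_neg at hno
    exact hx (Acc.intro x fun y hy => by
      by_contra hy'
      exact hy' (hno y hy))
  let seq : ℕ → {x : Proc Act Const // ¬ Acc (fun y x => Step S x .tau y) x} :=
    fun n => Nat.rec ⟨p, hacc⟩
      (fun _ ih => ⟨(key ih.1 ih.2).choose, (key ih.1 ih.2).choose_spec.2⟩) n
  refine ⟨fun n => (seq n).1, rfl, fun k => ?_⟩
  exact (key (seq k).1 (seq k).2).choose_spec.1

lemma convAlong_head {S : CCS Act Const} {Q : Proc Act Const} {u : List Act}
    (h : convAlong S Q u) : Conv S Q := by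
  cases u with
  | nil => exact h
  | cons a t => exact h.1

lemma usbU_head {S : CCS Act Const} {P : Proc Act Const} {u : List Act}
    (h : usbU S P u) : P ∈ Uclt S := by
  cases u with
  | nil => exact h
  | cons a t => exact h.1

/-! ### ParTau inversion and infinite runs -/

lemma parTau_inv {S : CCS Act Const} {st st' : Proc Act Const × Proc Act Const}
    (h : ParTau S st st') :
    (∃ p', Step S st.1 .tau p' ∧ st' = (p', st.2)) ∨
    (∃ r', Step S st.2 .tau r' ∧ st' = (st.1, r')) ∨
    (∃ a p' r', Step S st.1 (.act a) p' ∧ Step S st.2 (.act (S.co a)) r' ∧ st' = (p', r')) := by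
  cases h with
  | left h1 => exact Or.inl ⟨_, h1, rfl⟩
  | right h1 => exact Or.inr (Or.inl ⟨_, h1, rfl⟩)
  | sync h1 h2 => exact Or.inr (Or.inr ⟨_, _, _, h1, h2, rfl⟩)

def InfRun (S : CCS Act Const) (st : Proc Act Const × Proc Act Const) : Prop :=
  ∃ ρ : ℕ → Proc Act Const × Proc Act Const,
    ρ 0 = st ∧ ∀ k, ParTau S (ρ k) (ρ (k+1)) ∧ ¬ CanOk S (ρ k).2

lemma infRun_prepend {S : CCS Act Const} {st st' : Proc Act Const × Proc Act Const}
    (hPT : ParTau S st st') (hnok : ¬ CanOk S st.2) (h : InfRun S st') : InfRun S st := by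
  obtain ⟨ρ, h0, hs⟩ := h
  refine ⟨fun n => Nat.casesOn n st ρ, rfl, fun k => ?_⟩
  cases k with
  | zero => exact ⟨by simpa [h0] using hPT, hnok⟩
  | succ j => exact hs j

lemma maxComp_shift {S : CCS Act Const} {ρ : ℕ → Proc Act Const × Proc Act Const}
    (h : MaxComp S ρ) : MaxComp S (fun n => ρ (n+1)) := fun k => h (k+1)

end MTP

namespace MTP

variable {Act Const : Type}

/-- Steps transfer along the relation `c = ext one c' ∨ c = c'` (non-ok labels). -/
lemma rc_step_down {S : CCS Act Const} {c' c z : Proc Act Const} {l : Label Act}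
    (hR : c = Proc.ext .one c' ∨ c = c') (h : Step S c l z) (hl : l ≠ .ok) :
    Step S c' l z := by
  rcases hR with hR | hR
  · subst hR
    rcases step_ext_iff.mp h with h | h
    · exact absurd (step_one_inv h).1 hl
    · exact h
  · subst hR; exact h

lemma rc_step_up {S : CCS Act Const} {c' c z : Proc Act Const} {l : Label Act}
    (hR : c = Proc.ext .one c' ∨ c = c') (h : Step S c' l z) :
    Step S c l z := by
  rcases hR with hR | hR
  · subst hR; exact step_ext_iff.mpr (Or.inr h)
  · subst hR; exact h

/-- The mirror argument: if the client escapes at time 1 (state `(p'', esc S P)`)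
with `P` a usable client and `p''` an unsuccessful τ-residual of `P`,
then the server eventually reports success. -/
lemma escape_finish {S : CCS Act Const} {P p'' : Proc Act Const}
    (hokP : P ∈ Uclt S) (hUW : UWeak S P [] p'')
    (ρ : ℕ → Proc Act Const × Proc Act Const) (hM : MaxComp S ρ)
    (h1 : ρ 1 = (p'', esc S P)) :
    ∃ l, CanOk S (ρ l).1 := by
  classical
  set p₀ := escw S P with hp₀
  have hMust : Must S p₀ P := escw_must hokP
  obtain ⟨M, x, hx0, hxM, hstep, hnok⟩ := uweak_nil_path hUW
  set Rc : Proc Act Const → Proc Act Const → Prop :=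
    fun c' c => c = Proc.ext .one c' ∨ c = c' with hRc
  have hR1 : Rc p₀ ((ρ 1).2) := by rw [h1]; exact Or.inl rfl
  have Hstep : ∀ (j : ℕ) (c' : Proc Act Const), Rc c' ((ρ (1+j)).2) →
      ∃ c'', Rc c'' ((ρ (1+j+1)).2) ∧
        (ParTau S (c', (ρ (1+j)).1) (c'', (ρ (1+j+1)).1) ∨
          (StateStuck S (c', (ρ (1+j)).1) ∧ c'' = c' ∧ ρ (1+j+1) = ρ (1+j))) := by
    intro j c' hR
    rcases hM (1+j) with hPT | ⟨hstuck, heq⟩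
    · rcases parTau_inv hPT with ⟨y, hsy, he⟩ | ⟨r', hsr, he⟩ | ⟨a, y, r', hsy, hsr, he⟩
      · -- server τ step: mirror with .right
        refine ⟨c', by rw [he]; exact hR, Or.inl ?_⟩
        rw [he]
        exact ParTau.right hsy
      · -- client τ step: mirror with .left
        refine ⟨r', by rw [he]; exact Or.inr rfl, Or.inl ?_⟩
        rw [he]
        exact ParTau.left (rc_step_down hR hsr (by simp))
      · -- sync
        refine ⟨r', by rw [he]; exact Or.inr rfl, Or.inl ?_⟩
        rw [he]
        have hc' : Step S c' (.act (S.co a)) r' := rc_step_down hR hsr (by simp)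
        have hsrv : Step S ((ρ (1+j)).1) (.act (S.co (S.co a))) y := by
          rw [S.co_invol]; exact hsy
        exact ParTau.sync hc' hsrv
    · refine ⟨c', by rw [heq]; exact hR, Or.inr ⟨?_, rfl, heq⟩⟩
      rintro ⟨t, hT⟩
      apply hstuck
      rcases parTau_inv hT with ⟨y, hsy, _⟩ | ⟨r', hsr, _⟩ | ⟨a, y, r', hsy, hsr, _⟩
      · -- c' τ step lifts to client
        exact ⟨_, ParTau.right (rc_step_up hR hsy)⟩
      · exact ⟨_, ParTau.left hsr⟩
      · -- sync: server does co a, c' does a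
        have h2 : Step S ((ρ (1+j)).2) (.act (S.co (S.co a))) y := by
          rw [S.co_invol]; exact rc_step_up hR hsy
        exact ⟨_, ParTau.sync hsr h2⟩
  let F : ∀ j : ℕ, {c' : Proc Act Const // Rc c' ((ρ (1+j)).2)} :=
    fun j => Nat.rec ⟨p₀, hR1⟩
      (fun j ih => ⟨(Hstep j ih.1 ih.2).choose, (Hstep j ih.1 ih.2).choose_spec.1⟩) j
  have hFs : ∀ j, ParTau S ((F j).1, (ρ (1+j)).1) ((F (j+1)).1, (ρ (1+j+1)).1) ∨
      (StateStuck S ((F j).1, (ρ (1+j)).1) ∧ (F (j+1)).1 = (F j).1 ∧ ρ (1+j+1) = ρ (1+j)) :=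
    fun j => (Hstep j (F j).1 (F j).2).choose_spec.2
  have hF0 : (F 0).1 = p₀ := rfl
  -- the first components of ρ agree at times 0? we only need (ρ 1).1 = p''
  have hρ1 : (ρ 1).1 = p'' := by rw [h1]
  set σ : ℕ → Proc Act Const × Proc Act Const :=
    fun m => if m < M then (p₀, x m) else ((F (m - M)).1, (ρ (1 + (m - M))).1) with hσ
  have hσM : ∀ m, ¬ m < M → σ m = ((F (m - M)).1, (ρ (1 + (m - M))).1) := by
    intro m hm; simp [hσ, hm]
  have hσ0 : σ 0 = (p₀, P) := by
    by_cases h : 0 < M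
    · simp [hσ, h, hx0]
    · have hM0 : M = 0 := by omega
      rw [hσM 0 h, hM0]
      show ((F 0).1, (ρ 1).1) = (p₀, P)
      rw [hF0, hρ1, ← hxM, hM0, hx0]
  have hMC : MaxComp S σ := by
    intro m
    by_cases hm : m < M
    · by_cases hm1 : m + 1 < M
      · left
        simp only [hσ, if_pos hm, if_pos hm1]
        exact ParTau.right (hstep m hm)
      · -- m + 1 = M
        have hmM : m + 1 = M := by omega
        left
        have e1 : σ m = (p₀, x m) := by simp [hσ, hm]
        have e2 : σ (m+1) = (p₀, x (m+1)) := by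
          rw [hσM (m+1) (by omega)]
          have : m + 1 - M = 0 := by omega
          rw [this, hF0, hρ1, ← hxM, ← hmM]
        rw [e1, e2]
        exact ParTau.right (hstep m hm)
    · have hm1 : ¬ m + 1 < M := by omega
      have ej : m + 1 - M = (m - M) + 1 := by omega
      have eσ : σ (m+1) = ((F (m - M + 1)).1, (ρ (1 + (m - M + 1))).1) := by
        rw [hσM (m+1) hm1]
        exact congrArg (fun j => ((F j).1, (ρ (1+j)).1)) ej
      rcases hFs (m - M) with h | ⟨hstuck, he1, he2⟩
      · left
        rw [hσM m hm, eσ]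
        exact h
      · right
        constructor
        · rw [hσM m hm]; exact hstuck
        · rw [hσM m hm, eσ, he1]
          exact congrArg (fun st => ((F (m - M)).1, st.1)) he2
  obtain ⟨m, hok⟩ := hMust σ hσ0 hMC
  by_cases hm : m < M
  · exfalso
    have : (σ m).2 = x m := by simp [hσ, hm]
    rw [this] at hok
    exact hnok m (by omega) hok
  · refine ⟨1 + (m - M), ?_⟩
    have : (σ m).2 = (ρ (1 + (m - M))).1 := by rw [hσM m hm]
    rwa [this] at hok

end MTP

namespace MTP

variable {Act Const : Type}

/-- Main invariant lemma: any maximal computation of a server residual against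
the test is successful. -/
lemma test_aux (S : CCS Act Const) : ∀ (s₂ : List Act) (p'' : Proc Act Const),
    Acc (fun y x => Step S x .tau y) p'' →
    ∀ (Q P : Proc Act Const) (PriorOk : Prop),
    convAlong S Q s₂ → Weak S Q [] p'' →
    ((usbU S P s₂ ∧ UWeak S P [] p'') ∨ PriorOk) →
    ∀ ρ, ρ 0 = (p'', testC S P s₂) → MaxComp S ρ →
    (∃ k, CanOk S (ρ k).2) ∧ (PriorOk ∨ ∃ l, CanOk S (ρ l).1) := by
  intro s₂
  induction s₂ with
  | nil =>
    intro p'' hacc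
    induction hacc with
    | intro x hax ih =>
      intro Q P PriorOk hQ hreach hU ρ h0 hM
      rcases hM 0 with hPT | ⟨hstuck, _⟩
      · rw [h0] at hPT
        rcases parTau_inv hPT with ⟨y, hsy, he⟩ | ⟨c', hsc, he⟩ | ⟨a₀, y, c', hsy, hsc, he⟩
        · -- server τ step
          have hsy' : Step S x .tau y := hsy
          have h0' : (fun n => ρ (n+1)) 0 = (y, testC S P []) := by simp [he]
          have hreach' := weak_snoc_tau hreach hsy'
          by_cases hy : CanOk S y
          · obtain ⟨⟨k, hk⟩, _⟩ :=
              ih y hsy' Q P True hQ hreach' (Or.inr trivial) _ h0' (maxComp_shift hM)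
            exact ⟨⟨k+1, hk⟩, Or.inr ⟨1, by rw [he]; exact hy⟩⟩
          · have hU' : (usbU S P [] ∧ UWeak S P [] y) ∨ PriorOk :=
              hU.imp (fun hh => ⟨hh.1, uweak_snoc_tau hh.2 hsy' hy⟩) id
            obtain ⟨⟨k, hk⟩, h2⟩ :=
              ih y hsy' Q P PriorOk hQ hreach' hU' _ h0' (maxComp_shift hM)
            exact ⟨⟨k+1, hk⟩, h2.imp id (fun ⟨l, hl⟩ => ⟨l+1, hl⟩)⟩
        · -- client escape
          have hc : c' = esc S P := test_tau_inv hsc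
          refine ⟨⟨1, ?_⟩, ?_⟩
          · rw [he, hc]; exact canok_esc S P
          · rcases hU with ⟨hu, huw⟩ | hpo
            · exact Or.inr (escape_finish (usbU_head hu) huw ρ hM (by rw [he, hc]))
            · exact Or.inl hpo
        · -- sync: impossible for the empty trace
          obtain ⟨a', t', hst, _, _⟩ := test_act_inv hsc
          exact absurd hst (by simp)
      · rw [h0] at hstuck
        exact absurd ⟨_, ParTau.right (test_has_tau S P [])⟩ hstuck
  | cons a t iht =>
    intro p'' hacc
    induction hacc with
    | intro x hax ih =>
      intro Q P PriorOk hQ hreach hU ρ h0 hM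
      rcases hM 0 with hPT | ⟨hstuck, _⟩
      · rw [h0] at hPT
        rcases parTau_inv hPT with ⟨y, hsy, he⟩ | ⟨c', hsc, he⟩ | ⟨a₀, y, c', hsy, hsc, he⟩
        · -- server τ step
          have hsy' : Step S x .tau y := hsy
          have h0' : (fun n => ρ (n+1)) 0 = (y, testC S P (a :: t)) := by simp [he]
          have hreach' := weak_snoc_tau hreach hsy'
          by_cases hy : CanOk S y
          · obtain ⟨⟨k, hk⟩, _⟩ :=
              ih y hsy' Q P True hQ hreach' (Or.inr trivial) _ h0' (maxComp_shift hM)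
            exact ⟨⟨k+1, hk⟩, Or.inr ⟨1, by rw [he]; exact hy⟩⟩
          · have hU' : (usbU S P (a :: t) ∧ UWeak S P [] y) ∨ PriorOk :=
              hU.imp (fun hh => ⟨hh.1, uweak_snoc_tau hh.2 hsy' hy⟩) id
            obtain ⟨⟨k, hk⟩, h2⟩ :=
              ih y hsy' Q P PriorOk hQ hreach' hU' _ h0' (maxComp_shift hM)
            exact ⟨⟨k+1, hk⟩, h2.imp id (fun ⟨l, hl⟩ => ⟨l+1, hl⟩)⟩
        · -- client escape
          have hc : c' = esc S P := test_tau_inv hsc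
          refine ⟨⟨1, ?_⟩, ?_⟩
          · rw [he, hc]; exact canok_esc S P
          · rcases hU with ⟨hu, huw⟩ | hpo
            · exact Or.inr (escape_finish (usbU_head hu) huw ρ hM (by rw [he, hc]))
            · exact Or.inl hpo
        · -- synchronisation
          obtain ⟨a', t', hst, hb, hz⟩ := test_act_inv hsc
          injection hst with h1 h2
          subst h1
          subst h2
          have ha₀ : a₀ = a := by
            have := congrArg S.co hb
            rwa [S.co_invol, S.co_invol] at this
          subst ha₀
          have hsy' : Step S x (.act a₀) y := hsy
          have hwQ : Weak S Q [a₀] y := by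
            simpa using weak_snoc_act hreach hsy'
          have hQ' : convAlong S (bigOplus (after S Q [a₀])) t := hQ.2 ⟨y, hwQ⟩
          have hstepQ' : Step S (bigOplus (after S Q [a₀])) .tau y :=
            bigOplus_step_mem (repr_after hwQ) hwQ
          have hacc' : Acc (fun y x => Step S x .tau y) y :=
            (conv_acc (convAlong_head hQ')).inv hstepQ'
          have hreach' : Weak S (bigOplus (after S Q [a₀])) [] y := .tau hstepQ' (.refl _)
          have h0' : (fun n => ρ (n+1)) 0 = (y, testC S (bigOplus (afterU S P [a₀])) t) := by
            simp [he, hz]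
          by_cases hy : CanOk S y
          · obtain ⟨⟨k, hk⟩, _⟩ :=
              iht y hacc' (bigOplus (after S Q [a₀])) (bigOplus (afterU S P [a₀])) True
                hQ' hreach' (Or.inr trivial) _ h0' (maxComp_shift hM)
            exact ⟨⟨k+1, hk⟩, Or.inr ⟨1, by rw [he]; exact hy⟩⟩
          · have hU' : (usbU S (bigOplus (afterU S P [a₀])) t ∧
                UWeak S (bigOplus (afterU S P [a₀])) [] y) ∨ PriorOk := by
              refine hU.imp (fun hh => ?_) id
              have huw' : UWeak S P [a₀] y := by
                simpa using uweak_snoc_act hh.2 hsy' hy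
              exact ⟨hh.1.2 ⟨y, huw'⟩,
                UWeak.tau (bigOplus_no_ok S _)
                  (bigOplus_step_mem (repr_afterU huw') huw') (.refl hy)⟩
            obtain ⟨⟨k, hk⟩, h2⟩ :=
              iht y hacc' (bigOplus (after S Q [a₀])) (bigOplus (afterU S P [a₀])) PriorOk
                hQ' hreach' hU' _ h0' (maxComp_shift hM)
            exact ⟨⟨k+1, hk⟩, h2.imp id (fun ⟨l, hl⟩ => ⟨l+1, hl⟩)⟩
      · rw [h0] at hstuck
        exact absurd ⟨_, ParTau.right (test_has_tau S P (a :: t))⟩ hstuck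

end MTP

namespace MTP

variable {Act Const : Type}

lemma divergent_infRun (S : CCS Act Const) {q q' : Proc Act Const} {s : List Act}
    (h : Weak S q s q')
    (hd : ∃ ρ' : ℕ → Proc Act Const, ρ' 0 = q' ∧ ∀ k, Step S (ρ' k) .tau (ρ' (k+1))) :
    ∀ P, InfRun S (q, testC S P s) := by
  induction h with
  | refl p =>
    intro P
    obtain ⟨ρ', h0, hs⟩ := hd
    refine ⟨fun k => (ρ' k, testC S P []), by simp [h0], fun k => ?_⟩
    exact ⟨ParTau.left (hs k), test_no_ok S P []⟩
  | tau hstep _ ih =>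
    intro P
    exact infRun_prepend (ParTau.left hstep) (test_no_ok S P _) (ih hd P)
  | act hstep _ ih =>
    intro P
    rename_i p1 p2 q3 aa ss hw
    exact infRun_prepend (ParTau.sync hstep (test_act_intro S P aa ss))
      (test_no_ok S P _) (ih hd (bigOplus (afterU S P [aa])))

lemma infRun_not_mustSC {S : CCS Act Const} {qq r : Proc Act Const}
    (h : InfRun S (qq, r)) : ¬ MustSC S qq r := by
  intro hm
  obtain ⟨ρ, h0, hs⟩ := h
  obtain ⟨⟨k, hok⟩, _⟩ := hm ρ h0 (fun k => Or.inl (hs k).1)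
  exact (hs k).2 hok

end MTP


/-- Lemma 5.6: residuals of the larger peer converge. -/
theorem p2pLe_residual_conv {Act Const : Type} (S : MTP.CCS Act Const)
    (p q q' : MTP.Proc Act Const) (s : List Act)
    (hLe : MTP.p2pLe S p q)
    (hConv : MTP.convP S p s)
    (hWeak : MTP.Weak S q s q') :
    MTP.Conv S q' := by
  classical
  by_contra hndiv
  have hdiv : ∃ ρ' : ℕ → MTP.Proc Act Const,
      ρ' 0 = q' ∧ ∀ k, MTP.Step S (ρ' k) .tau (ρ' (k+1)) := not_not.mp hndiv
  have hA : MTP.MustSC S p (MTP.testC S p s) := by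
    intro ρ h0 hM
    have hacc := MTP.conv_acc (MTP.convAlong_head hConv.1)
    by_cases hok : MTP.CanOk S p
    · have := MTP.test_aux S s p hacc p p True hConv.1 (.refl p) (Or.inr trivial) ρ h0 hM
      exact ⟨this.1, ⟨0, by rw [h0]; exact hok⟩⟩
    · have := MTP.test_aux S s p hacc p p False hConv.1 (.refl p)
        (Or.inl ⟨hConv.2, .refl hok⟩) ρ h0 hM
      exact ⟨this.1, this.2.resolve_left (fun f => f)⟩
  have hB := hLe _ hA
  exact MTP.infRun_not_mustSC (MTP.divergent_infRun S hWeak hdiv p) hB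
end

section
/- If p ⊑_p2p q and p ⇓p2p s (for s ∈ Act*), then q ⇓ s. -/
namespace MTP

namespace Aux

variable {Act Const : Type}

/-! ### Basic inversion and introduction lemmas for `Step` -/

theorem step_sum_inv {S : CCS Act Const} {f : ℕ → Option (Proc Act Const)}
    {l : Label Act} {q : Proc Act Const} (h : Step S (.sum f) l q) :
    ∃ i p, f i = some p ∧ Step S p l q := by
  cases h with
  | sum hf hs => exact ⟨_, _, hf, hs⟩

theorem step_pre_inv {S : CCS Act Const} {μ : Option Act} {p : Proc Act Const}
    {l : Label Act} {q : Proc Act Const} (h : Step S (.pre μ p) l q) :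
    q = p ∧ ((∃ a, μ = some a ∧ l = .act a) ∨ (μ = none ∧ l = .tau)) := by
  cases h with
  | preAct a p => exact ⟨rfl, .inl ⟨a, rfl, rfl⟩⟩
  | preTau p => exact ⟨rfl, .inr ⟨rfl, rfl⟩⟩

theorem step_ext_left {S : CCS Act Const} {p q r : Proc Act Const} {l : Label Act}
    (h : Step S p l r) : Step S (Proc.ext p q) l r := by
  unfold Proc.ext
  exact Step.sum (i := 0) (by simp) h

theorem step_ext_right {S : CCS Act Const} {p q r : Proc Act Const} {l : Label Act}
    (h : Step S q l r) : Step S (Proc.ext p q) l r := by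
  unfold Proc.ext
  exact Step.sum (i := 1) (by simp) h

theorem step_ext_inv {S : CCS Act Const} {p q r : Proc Act Const} {l : Label Act}
    (h : Step S (Proc.ext p q) l r) : Step S p l r ∨ Step S q l r := by
  unfold Proc.ext at h
  obtain ⟨i, x, hx, hs⟩ := step_sum_inv h
  by_cases h0 : i = 0
  · subst h0; simp only [if_pos rfl] at hx
    exact .inl (by cases hx; exact hs)
  · by_cases h1 : i = 1
    · subst h1; simp only [h0] at hx; simp at hx
      exact .inr (by cases hx; exact hs)
    · simp [h0, h1] at hx

theorem notCanOk_pre {S : CCS Act Const} {μ : Option Act} {p : Proc Act Const} :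
    ¬ CanOk S (.pre μ p) := by
  rintro ⟨q, h⟩
  obtain ⟨-, h | h⟩ := step_pre_inv h
  · obtain ⟨a, -, h⟩ := h; cases h
  · cases h.2

theorem canOk_ext_one {S : CCS Act Const} {w : Proc Act Const} :
    CanOk S (Proc.ext w .one) := ⟨_, step_ext_right Step.one⟩

theorem co_inj {S : CCS Act Const} {a b : Act} (h : S.co a = S.co b) : a = b := by
  have := congrArg S.co h
  rwa [S.co_invol, S.co_invol] at this

/-! ### ParTau inversion -/

theorem parTau_inv {S : CCS Act Const} {st t : Proc Act Const × Proc Act Const}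
    (h : ParTau S st t) :
    (∃ p', Step S st.1 .tau p' ∧ t = (p', st.2)) ∨
    (∃ r', Step S st.2 .tau r' ∧ t = (st.1, r')) ∨
    (∃ a p' r', Step S st.1 (.act a) p' ∧ Step S st.2 (.act (S.co a)) r' ∧ t = (p', r')) := by
  cases h with
  | left h => exact .inl ⟨_, h, rfl⟩
  | right h => exact .inr (.inl ⟨_, h, rfl⟩)
  | sync h1 h2 => exact .inr (.inr ⟨_, _, _, h1, h2, rfl⟩)

/-! ### Weak transition lemmas -/

theorem weak_append {S : CCS Act Const} {p y q : Proc Act Const} {u v : List Act}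
    (h1 : Weak S p u y) (h2 : Weak S y v q) : Weak S p (u ++ v) q := by
  induction h1 with
  | refl p => exact h2
  | tau hs _ ih => exact .tau hs (ih h2)
  | act hs _ ih => exact .act hs (ih h2)

theorem weak_snoc_tau {S : CCS Act Const} {p y y' : Proc Act Const} {u : List Act}
    (h1 : Weak S p u y) (h2 : Step S y .tau y') : Weak S p u y' := by
  induction h1 with
  | refl p => exact .tau h2 (.refl _)
  | tau hs _ ih => exact .tau hs (ih h2)
  | act hs _ ih => exact .act hs (ih h2)

theorem weak_snoc_act {S : CCS Act Const} {p y y' : Proc Act Const} {u : List Act} {a : Act}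
    (h1 : Weak S p u y) (h2 : Step S y (.act a) y') : Weak S p (u ++ [a]) y' := by
  induction h1 with
  | refl p => exact .act h2 (.refl _)
  | tau hs _ ih => exact .tau hs (ih h2)
  | act hs _ ih => exact .act hs (ih h2)

theorem weak_cons_inv {S : CCS Act Const} {p q : Proc Act Const} {s : List Act}
    (h : Weak S p s q) : ∀ a u, s = a :: u → ∃ y, Weak S p [a] y ∧ Weak S y u q := by
  induction h with
  | refl p => intro a u h; cases h
  | tau hs _ ih =>
      intro a u h
      obtain ⟨y, h1, h2⟩ := ih a u h
      exact ⟨y, .tau hs h1, h2⟩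
  | act hs hw _ =>
      intro a u h
      cases h
      exact ⟨_, .act hs (.refl _), hw⟩

/-! ### UWeak lemmas -/

theorem uweak_start_notOk {S : CCS Act Const} {p q : Proc Act Const} {s : List Act}
    (h : UWeak S p s q) : ¬ CanOk S p := by
  cases h with
  | refl h => exact h
  | tau h _ _ => exact h
  | act h _ _ => exact h

theorem uweak_to_weak {S : CCS Act Const} {p q : Proc Act Const} {s : List Act}
    (h : UWeak S p s q) : Weak S p s q := by
  induction h with
  | refl _ => exact .refl _
  | tau _ hs _ ih => exact .tau hs ih
  | act _ hs _ ih => exact .act hs ih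

theorem uweak_append {S : CCS Act Const} {p y q : Proc Act Const} {u v : List Act}
    (h1 : UWeak S p u y) (h2 : UWeak S y v q) : UWeak S p (u ++ v) q := by
  induction h1 with
  | refl _ => exact h2
  | tau h hs _ ih => exact .tau h hs (ih h2)
  | act h hs _ ih => exact .act h hs (ih h2)

theorem uweak_snoc_tau {S : CCS Act Const} {p y y' : Proc Act Const} {u : List Act}
    (h1 : UWeak S p u y) (h2 : Step S y .tau y') (h3 : ¬ CanOk S y') : UWeak S p u y' := by
  induction h1 with
  | refl h => exact .tau h h2 (.refl h3)
  | tau h hs _ ih => exact .tau h hs (ih h2)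
  | act h hs _ ih => exact .act h hs (ih h2)

theorem uweak_snoc_act {S : CCS Act Const} {p y y' : Proc Act Const} {u : List Act} {a : Act}
    (h1 : UWeak S p u y) (h2 : Step S y (.act a) y') (h3 : ¬ CanOk S y') :
    UWeak S p (u ++ [a]) y' := by
  induction h1 with
  | refl h => exact .act h h2 (.refl h3)
  | tau h hs _ ih => exact .tau h hs (ih h2)
  | act h hs _ ih => exact .act h hs (ih h2)

theorem uweak_cons_inv {S : CCS Act Const} {p q : Proc Act Const} {s : List Act}
    (h : UWeak S p s q) : ∀ a u, s = a :: u → ∃ y, UWeak S p [a] y ∧ UWeak S y u q := by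
  induction h with
  | refl _ => intro a u h; cases h
  | tau h hs _ ih =>
      intro a u he
      obtain ⟨y, h1, h2⟩ := ih a u he
      exact ⟨y, .tau h hs h1, h2⟩
  | act h hs hw _ =>
      intro a u he
      cases he
      exact ⟨_, .act h hs (.refl (uweak_start_notOk hw)), hw⟩

/-! ### Convergence lemmas -/

theorem not_conv_of_step {S : CCS Act Const} {p p' : Proc Act Const}
    (h : Step S p .tau p') (h2 : ¬ Conv S p') : Conv S p → False := by
  intro hc
  rw [Conv, not_not] at h2
  obtain ⟨ρ, h0, hs⟩ := h2
  refine hc ⟨fun k => match k with | 0 => p | k+1 => ρ k, rfl, fun k => ?_⟩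
  match k with
  | 0 => simpa [h0] using h
  | k+1 => exact hs k

theorem conv_of_step {S : CCS Act Const} {p p' : Proc Act Const}
    (hc : Conv S p) (h : Step S p .tau p') : Conv S p' := by
  by_contra h2
  exact not_conv_of_step h h2 hc

theorem conv_weak_nil {S : CCS Act Const} {p p' : Proc Act Const}
    (hc : Conv S p) (h : Weak S p [] p') : Conv S p' := by
  generalize he : ([] : List Act) = s at h
  induction h with
  | refl _ => exact hc
  | tau hs _ ih => exact ih (conv_of_step hc hs) he
  | act hs hw ih => cases he

/-! ### Countability of reachable processes -/

def dec (S : CCS Act Const) : Proc Act Const → List ℕ → Option (Label Act × Proc Act Const)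
  | .one, [] => some (.ok, .nil)
  | .pre (some a) p, [] => some (.act a, p)
  | .pre none p, [] => some (.tau, p)
  | .sum f, n :: ns =>
      match f n with
      | some p => dec S p ns
      | none => none
  | .const A, _ :: ns => dec S (S.defn A) ns
  | _, _ => none
  termination_by p ns => ns.length

theorem dec_step {S : CCS Act Const} :
    ∀ (ns : List ℕ) (p : Proc Act Const) {l q}, dec S p ns = some (l, q) → Step S p l q := by
  intro ns
  induction ns with
  | nil =>
      intro p l q h
      match p with
      | .one => simp only [dec, Option.some.injEq, Prod.mk.injEq] at h
                cases h.1; cases h.2; exact Step.one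
      | .pre (some a) p => simp only [dec, Option.some.injEq, Prod.mk.injEq] at h
                           cases h.1; cases h.2; exact Step.preAct a q
      | .pre none p => simp only [dec, Option.some.injEq, Prod.mk.injEq] at h
                       cases h.1; cases h.2; exact Step.preTau q
      | .sum f => simp [dec] at h
      | .const A => simp [dec] at h
  | cons n ns ih =>
      intro p l q h
      match p with
      | .one => simp [dec] at h
      | .pre μ p => match μ with
        | some a => simp [dec] at h
        | none => simp [dec] at h
      | .sum f =>
          rw [dec] at h
          match hf : f n with
          | some p' => rw [hf] at h; exact Step.sum hf (ih _ h)
          | none => rw [hf] at h; cases h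
      | .const A =>
          rw [dec] at h
          exact Step.const (ih _ h)

theorem step_dec {S : CCS Act Const} {p : Proc Act Const} {l q}
    (h : Step S p l q) : ∃ ns, dec S p ns = some (l, q) := by
  induction h with
  | one => exact ⟨[], by simp [dec]⟩
  | preAct a p => exact ⟨[], by simp [dec]⟩
  | preTau p => exact ⟨[], by simp [dec]⟩
  | sum hf _ ih =>
      obtain ⟨ns, hns⟩ := ih
      exact ⟨_ :: ns, by rw [dec, hf]; exact hns⟩
  | const _ ih =>
      obtain ⟨ns, hns⟩ := ih
      exact ⟨0 :: ns, by rw [dec]; exact hns⟩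

def decs (S : CCS Act Const) : Proc Act Const → List (List ℕ) → Option (Proc Act Const)
  | p, [] => some p
  | p, ns :: L =>
      match dec S p ns with
      | some (_, q) => decs S q L
      | none => none

def Reach (S : CCS Act Const) (p : Proc Act Const) : Set (Proc Act Const) :=
  {x | ∃ L, decs S p L = some x}

theorem weak_reach {S : CCS Act Const} {p q : Proc Act Const} {s : List Act}
    (h : Weak S p s q) : q ∈ Reach S p := by
  induction h with
  | refl p => exact ⟨[], rfl⟩
  | tau hs _ ih =>
      obtain ⟨L, hL⟩ := ih
      obtain ⟨ns, hns⟩ := step_dec hs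
      exact ⟨ns :: L, by rw [decs, hns]; exact hL⟩
  | act hs _ ih =>
      obtain ⟨L, hL⟩ := ih
      obtain ⟨ns, hns⟩ := step_dec hs
      exact ⟨ns :: L, by rw [decs, hns]; exact hL⟩

theorem reach_countable (S : CCS Act Const) (p : Proc Act Const) :
    (Reach S p).Countable := by
  have h1 : (Set.range (decs S p)).Countable := Set.countable_range _
  have h2 : Reach S p ⊆ (fun x => some x) ⁻¹' Set.range (decs S p) := by
    rintro x ⟨L, hL⟩
    exact ⟨L, hL⟩
  exact (h1.preimage (Option.some_injective _)).mono h2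

theorem exists_range_after {S : CCS Act Const} {p : Proc Act Const} {a : Act}
    (hne : ∃ y, Weak S p [a] y) :
    ∃ f : ℕ → Proc Act Const, Set.range f = after S p [a] := by
  have hc : (after S p [a]).Countable :=
    (reach_countable S p).mono (fun x hx => weak_reach hx)
  obtain ⟨f, hf⟩ := hc.exists_eq_range hne
  exact ⟨f, hf.symm⟩

theorem exists_range_afterU {S : CCS Act Const} {p : Proc Act Const} {a : Act}
    (hne : ∃ y, UWeak S p [a] y) :
    ∃ f : ℕ → Proc Act Const, Set.range f = afterU S p [a] := by
  have hc : (afterU S p [a]).Countable :=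
    (reach_countable S p).mono (fun x hx => weak_reach (uweak_to_weak hx))
  obtain ⟨f, hf⟩ := hc.exists_eq_range hne
  exact ⟨f, hf.symm⟩

/-! ### bigOplus lemmas -/

theorem notCanOk_bigOplus {S : CCS Act Const} {X : Set (Proc Act Const)} :
    ¬ CanOk S (bigOplus X) := by
  rintro ⟨q, h⟩
  unfold bigOplus at h
  split_ifs at h with hex
  · obtain ⟨i, x, hx, hs⟩ := step_sum_inv h
    cases hx
    exact notCanOk_pre ⟨_, hs⟩
  · unfold Proc.nil at h
    obtain ⟨i, x, hx, -⟩ := step_sum_inv h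
    cases hx

theorem bigOplus_mem_step {S : CCS Act Const} {X : Set (Proc Act Const)}
    (hex : ∃ f : ℕ → Proc Act Const, Set.range f = X) {x : Proc Act Const} (hx : x ∈ X) :
    Step S (bigOplus X) .tau x := by
  unfold bigOplus
  rw [dif_pos hex]
  have : x ∈ Set.range hex.choose := by rw [hex.choose_spec]; exact hx
  obtain ⟨n, hn⟩ := this
  exact Step.sum (i := n) rfl (hn ▸ Step.preTau _)

theorem bigOplus_step_inv {S : CCS Act Const} {X : Set (Proc Act Const)}
    {l : Label Act} {q : Proc Act Const} (h : Step S (bigOplus X) l q) :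
    l = .tau ∧ q ∈ X := by
  unfold bigOplus at h
  split_ifs at h with hex
  · obtain ⟨i, x, hx, hs⟩ := step_sum_inv h
    cases hx
    obtain ⟨rfl, h | h⟩ := step_pre_inv hs
    · obtain ⟨a, ha, -⟩ := h; cases ha
    · refine ⟨h.2, ?_⟩
      have hm : hex.choose i ∈ Set.range hex.choose := ⟨i, rfl⟩
      rwa [hex.choose_spec] at hm
  · unfold Proc.nil at h
    obtain ⟨i, x, hx, -⟩ := step_sum_inv h
    cases hx
/-! ### Witnesses and the test process -/

open scoped Classical in
noncomputable def wit (S : CCS Act Const) (X : Proc Act Const) : Proc Act Const :=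
  if h : X ∈ Uclt S then h.choose else .nil

theorem wit_must {S : CCS Act Const} {X : Proc Act Const} (h : X ∈ Uclt S) :
    Must S (wit S X) X := by
  unfold wit
  split
  · exact ‹X ∈ Uclt S›.choose_spec
  · exact absurd h ‹¬ X ∈ Uclt S›

noncomputable def test (S : CCS Act Const) : Proc Act Const → List Act → Proc Act Const
  | X, [] => .pre none (.ext (wit S X) .one)
  | X, a :: t => .ext (.pre none (.ext (wit S X) .one))
      (.pre (some (S.co a)) (test S (bigOplus (afterU S X [a])) t))

theorem notCanOk_test {S : CCS Act Const} {X : Proc Act Const} {s : List Act} :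
    ¬ CanOk S (test S X s) := by
  cases s with
  | nil => exact notCanOk_pre
  | cons a t =>
      rintro ⟨q, h⟩
      rcases step_ext_inv h with h | h
      · exact notCanOk_pre ⟨_, h⟩
      · exact notCanOk_pre ⟨_, h⟩

theorem test_tau {S : CCS Act Const} (X : Proc Act Const) (s : List Act) :
    Step S (test S X s) .tau (.ext (wit S X) .one) := by
  cases s with
  | nil => exact Step.preTau _
  | cons a t => exact step_ext_left (Step.preTau _)

theorem test_len {S : CCS Act Const} :
    ∀ (s : List Act) (X : Proc Act Const) (t : List Act) (Y : Proc Act Const),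
      test S X s = test S Y t → s.length = t.length := by
  intro s
  induction s with
  | nil =>
      intro X t Y h
      cases t with
      | nil => rfl
      | cons b t' => simp only [test] at h; unfold Proc.ext at h; cases h
  | cons a s' ih =>
      intro X t Y h
      cases t with
      | nil => simp only [test] at h; unfold Proc.ext at h; cases h
      | cons b t' =>
          simp only [test] at h
          unfold Proc.ext at h
          have hf := congrFun (Proc.sum.inj h) 1
          simp only [one_ne_zero, if_false, if_true, if_pos, reduceIte, Option.some.injEq] at hf
          have := (Proc.pre.inj hf).2
          simpa using ih _ _ _ this

theorem test_ne_ext {S : CCS Act Const} {X : Proc Act Const} {s : List Act}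
    {w : Proc Act Const} : test S X s ≠ Proc.ext w .one := by
  cases s with
  | nil => intro h; unfold Proc.ext at h; cases h
  | cons a t =>
      intro h
      simp only [test] at h
      unfold Proc.ext at h
      have hf := congrFun (Proc.sum.inj h) 1
      simp only [one_ne_zero, if_false, if_true, if_pos, reduceIte, Option.some.injEq] at hf
      cases hf

theorem test_step_inv {S : CCS Act Const} {X : Proc Act Const} {s : List Act}
    {l : Label Act} {r : Proc Act Const} (h : Step S (test S X s) l r) :
    (l = .tau ∧ r = .ext (wit S X) .one) ∨
    (∃ a t, s = a :: t ∧ l = .act (S.co a) ∧ r = test S (bigOplus (afterU S X [a])) t) := by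
  cases s with
  | nil =>
      obtain ⟨rfl, h | h⟩ := step_pre_inv h
      · obtain ⟨a, ha, -⟩ := h; cases ha
      · exact .inl ⟨h.2, rfl⟩
  | cons a t =>
      rcases step_ext_inv h with h | h
      · obtain ⟨rfl, h | h⟩ := step_pre_inv h
        · obtain ⟨b, hb, -⟩ := h; cases hb
        · exact .inl ⟨h.2, rfl⟩
      · obtain ⟨rfl, h | h⟩ := step_pre_inv h
        · obtain ⟨b, hb, hl⟩ := h
          cases hb
          exact .inr ⟨a, t, rfl, hl, rfl⟩
        · cases h.1

/-! ### Must is preserved by unsuccessful τ-moves of the client -/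

theorem must_step {S : CCS Act Const} {w x x' : Proc Act Const}
    (hM : Must S w x) (hnc : ¬ CanOk S x) (hs : Step S x .tau x') : Must S w x' := by
  intro ρ h0 hmax
  have hmax' : MaxComp S (fun k => match k with | 0 => (w, x) | k+1 => ρ k) := by
    intro k
    match k with
    | 0 =>
        left
        show ParTau S (w, x) (ρ 0)
        rw [h0]
        exact ParTau.right hs
    | k+1 => exact hmax k
  obtain ⟨k, hk⟩ := hM _ rfl hmax'
  match k with
  | 0 => exact absurd hk hnc
  | k+1 => exact ⟨k, hk⟩

theorem must_uweak_nil {S : CCS Act Const} {w x x' : Proc Act Const}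
    (h : UWeak S x [] x') (hM : Must S w x) : Must S w x' := by
  generalize he : ([] : List Act) = s at h
  induction h with
  | refl _ => exact hM
  | tau hnc hs _ ih => exact ih (must_step hM hnc hs) he
  | act _ _ _ _ => cases he

/-! ### Transfer lemma: runs of (x, w + 1) and Must -/

def Rel (w c r : Proc Act Const) : Prop := c = r ∨ (c = w ∧ r = Proc.ext w .one)

theorem rel_lift {S : CCS Act Const} {w c r r' : Proc Act Const} {l : Label Act}
    (hrel : Rel w c r) (hl : l ≠ .ok) (h : Step S r l r') : Step S c l r' := by
  rcases hrel with rfl | ⟨rfl, rfl⟩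
  · exact h
  · rcases step_ext_inv h with h | h
    · exact h
    · cases h; exact absurd rfl hl

theorem rel_rev {S : CCS Act Const} {w c r r' : Proc Act Const} {l : Label Act}
    (hrel : Rel w c r) (h : Step S c l r') : Step S r l r' := by
  rcases hrel with rfl | ⟨rfl, rfl⟩
  · exact h
  · exact step_ext_left h

noncomputable def trf {S : CCS Act Const} {w : Proc Act Const}
    (ρ : ℕ → Proc Act Const × Proc Act Const)
    (KEY : ∀ k (c : Proc Act Const), Rel w c (ρ k).2 →
      ∃ c', Rel w c' (ρ (k+1)).2 ∧
        (ParTau S (c, (ρ k).1) (c', (ρ (k+1)).1) ∨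
          (StateStuck S (c, (ρ k).1) ∧ ((c', (ρ (k+1)).1) = (c, (ρ k).1)))))
    (base : Rel w w (ρ 0).2) : ∀ k, {c : Proc Act Const // Rel w c (ρ k).2}
  | 0 => ⟨w, base⟩
  | k+1 =>
      ⟨(KEY k (trf ρ KEY base k).1 (trf ρ KEY base k).2).choose,
       (KEY k (trf ρ KEY base k).1 (trf ρ KEY base k).2).choose_spec.1⟩

theorem trans_lemma {S : CCS Act Const} {w x : Proc Act Const}
    (hM : Must S w x) (ρ : ℕ → Proc Act Const × Proc Act Const)
    (hmax : MaxComp S ρ) (h0 : ρ 0 = (x, Proc.ext w .one)) :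
    ∃ j, CanOk S (ρ j).1 := by
  have KEY : ∀ k (c : Proc Act Const), Rel w c (ρ k).2 →
      ∃ c', Rel w c' (ρ (k+1)).2 ∧
        (ParTau S (c, (ρ k).1) (c', (ρ (k+1)).1) ∨
          (StateStuck S (c, (ρ k).1) ∧ ((c', (ρ (k+1)).1) = (c, (ρ k).1)))) := by
    intro k c hrel
    rcases hmax k with hstep | ⟨hstk, heq⟩
    · rcases parTau_inv hstep with ⟨p', hs, heq⟩ | ⟨r', hs, heq⟩ | ⟨a, p', r', h1, h2, heq⟩
      · refine ⟨c, ?_, .inl ?_⟩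
        · rw [heq]; exact hrel
        · rw [heq]; exact ParTau.right hs
      · refine ⟨r', ?_, .inl ?_⟩
        · rw [heq]; exact .inl rfl
        · rw [heq]
          exact ParTau.left (rel_lift hrel (by intro h; cases h) hs)
      · refine ⟨r', ?_, .inl ?_⟩
        · rw [heq]; exact .inl rfl
        · rw [heq]
          refine ParTau.sync (a := S.co a) (rel_lift hrel (by intro h; cases h) h2) ?_
          rw [S.co_invol]; exact h1
    · refine ⟨c, ?_, .inr ⟨?_, by rw [heq]⟩⟩
      · rw [heq]; exact hrel
      · rintro ⟨t, ht⟩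
        rcases parTau_inv ht with ⟨c₂, hs, -⟩ | ⟨x₂, hs, -⟩ | ⟨b, c₂, x₂, hsc, hsx, -⟩
        · refine hstk ⟨((ρ k).1, c₂), ?_⟩
          have : ParTau S ((ρ k).1, (ρ k).2) ((ρ k).1, c₂) := ParTau.right (rel_rev hrel hs)
          simpa using this
        · refine hstk ⟨(x₂, (ρ k).2), ?_⟩
          have : ParTau S ((ρ k).1, (ρ k).2) (x₂, (ρ k).2) := ParTau.left hs
          simpa using this
        · refine hstk ⟨(x₂, c₂), ?_⟩
          have : ParTau S ((ρ k).1, (ρ k).2) (x₂, c₂) := by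
            refine ParTau.sync (a := S.co b) hsx ?_
            rw [S.co_invol]
            exact rel_rev hrel hsc
          simpa using this
  have base : Rel w w (ρ 0).2 := .inr ⟨rfl, by rw [h0]⟩
  let f := trf (S := S) ρ KEY base
  have hfmax : MaxComp S (fun k => ((f k).1, (ρ k).1)) := by
    intro k
    have hspec := (KEY k (f k).1 (f k).2).choose_spec.2
    have hfk : (f (k+1)).1 = (KEY k (f k).1 (f k).2).choose := rfl
    show ParTau S ((f k).1, (ρ k).1) ((f (k+1)).1, (ρ (k+1)).1) ∨
      (StateStuck S ((f k).1, (ρ k).1) ∧ ((f (k+1)).1, (ρ (k+1)).1) = ((f k).1, (ρ k).1))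
    rw [hfk]
    rcases hspec with h | ⟨h1, h2⟩
    · exact .inl h
    · exact .inr ⟨h1, h2⟩
  have h0' : (fun k => ((f k).1, (ρ k).1)) 0 = (w, x) := by
    simp only [f, trf]
    rw [h0]
  obtain ⟨k, hk⟩ := hM _ h0' hfmax
  exact ⟨k, hk⟩
/-! ### convAlong vs residual convergence -/

theorem lemA {S : CCS Act Const} :
    ∀ (s : List Act) (p : Proc Act Const), convAlong S p s →
      ∀ k, k ≤ s.length → ∀ P', Weak S p (s.take k) P' → Conv S P' := by
  intro s
  induction s with
  | nil =>
      intro p hC k hk P' hw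
      have hk0 : k = 0 := Nat.le_zero.mp hk
      subst hk0
      exact conv_weak_nil hC hw
  | cons a t ih =>
      intro p hC k hk P' hw
      match k with
      | 0 => exact conv_weak_nil hC.1 hw
      | k+1 =>
          rw [List.take_succ_cons] at hw
          obtain ⟨y, h1, h2⟩ := weak_cons_inv hw a _ rfl
          have henum := exists_range_after ⟨y, h1⟩
          have hstep : Step S (bigOplus (after S p [a])) .tau y := bigOplus_mem_step henum h1
          exact ih _ (hC.2 ⟨y, h1⟩) k (by simpa using hk) P' (.tau hstep h2)

theorem lemB {S : CCS Act Const} :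
    ∀ (s : List Act) (q : Proc Act Const),
      (∀ k, k ≤ s.length → ∀ q', Weak S q (s.take k) q' → Conv S q') → convAlong S q s := by
  intro s
  induction s with
  | nil =>
      intro q h
      exact h 0 (by simp) q (.refl q)
  | cons a t ih =>
      intro q h
      refine ⟨h 0 (by simp) q (.refl q), fun hex => ?_⟩
      have key : ∀ (u : List Act) q', Weak S (bigOplus (after S q [a])) u q' →
          (∃ k, k ≤ t.length ∧ u = t.take k) → Conv S q' := by
        intro u q' hw
        cases hw with
        | refl _ =>
            rintro - ⟨ρ, h0, hs⟩
            have hst : Step S (bigOplus (after S q [a])) .tau (ρ 1) := h0 ▸ hs 0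
            have hy : Weak S q [a] (ρ 1) := (bigOplus_step_inv hst).2
            have hc : Conv S (ρ 1) := h 1 (by simp) _ (by simpa using hy)
            exact hc ⟨fun j => ρ (j+1), rfl, fun j => hs (j+1)⟩
        | tau hst hw' =>
            rintro ⟨k, hk, rfl⟩
            have hy := (bigOplus_step_inv hst).2
            have : Weak S q (a :: t.take k) q' := weak_append (u := [a]) hy hw'
            exact h (k+1) (by simpa using hk) q' (by simpa using this)
        | act hst _ =>
            exact absurd (bigOplus_step_inv hst).1 (by simp)
      exact ih _ (fun k hk q' hw => key _ q' hw ⟨k, hk, rfl⟩)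
/-! ### Runs against a test client -/

theorem no_stuck_test {S : CCS Act Const} {P X : Proc Act Const} {s : List Act} :
    ¬ StateStuck S (P, test S X s) :=
  fun h => h ⟨(P, _), ParTau.right (test_tau X s)⟩

theorem step_client_same {S : CCS Act Const} {P₁ X : Proc Act Const} {s : List Act}
    {st : Proc Act Const × Proc Act Const}
    (h : ParTau S (P₁, test S X s) st) (h2 : st.2 = test S X s) :
    Step S P₁ .tau st.1 := by
  rcases parTau_inv h with ⟨p', hs, heq⟩ | ⟨r', hs, heq⟩ | ⟨b, p', r', h1, hc, heq⟩
  · rw [heq]; exact hs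
  · exfalso
    rw [heq] at h2
    rcases test_step_inv hs with ⟨-, rfl⟩ | ⟨c, t', rfl, hl, rfl⟩
    · exact test_ne_ext h2.symm
    · simpa using test_len _ _ _ _ h2
  · exfalso
    rw [heq] at h2
    rcases test_step_inv hc with ⟨hl, -⟩ | ⟨c, t', rfl, hl, rfl⟩
    · cases hl
    · simpa using test_len _ _ _ _ h2

theorem run_prefix_steps {S : CCS Act Const} {ρ : ℕ → Proc Act Const × Proc Act Const}
    (hmax : MaxComp S ρ) {X : Proc Act Const} {s : List Act} {J : ℕ}
    (hall : ∀ j, j ≤ J → (ρ j).2 = test S X s) :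
    ∀ j, j < J → Step S (ρ j).1 .tau (ρ (j+1)).1 := by
  intro j hj
  have hj2 := hall j hj.le
  rcases hmax j with hstep | ⟨hstk, -⟩
  · have hstep' : ParTau S ((ρ j).1, test S X s) (ρ (j+1)) := by
      rw [← hj2]; exact hstep
    exact step_client_same hstep' (hall (j+1) hj)
  · exfalso
    apply no_stuck_test (P := (ρ j).1) (X := X) (s := s)
    rw [← hj2]
    exact hstk

theorem run_prefix_weak {S : CCS Act Const} {ρ : ℕ → Proc Act Const × Proc Act Const}
    (hmax : MaxComp S ρ) {P X : Proc Act Const} {s : List Act} {J : ℕ}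
    (h0 : ρ 0 = (P, test S X s))
    (hall : ∀ j, j ≤ J → (ρ j).2 = test S X s) :
    ∀ j, j ≤ J → Weak S P [] (ρ j).1 := by
  intro j hj
  induction j with
  | zero => rw [h0]; exact .refl P
  | succ j ih =>
      exact weak_snoc_tau (ih (Nat.le_of_succ_le hj))
        (run_prefix_steps hmax hall j (Nat.lt_of_succ_le hj))

theorem run_prefix_uweak {S : CCS Act Const} {ρ : ℕ → Proc Act Const × Proc Act Const}
    (hmax : MaxComp S ρ) {P X : Proc Act Const} {s : List Act} {J : ℕ}
    (h0 : ρ 0 = (P, test S X s))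
    (hall : ∀ j, j ≤ J → (ρ j).2 = test S X s)
    (hsv : ∀ j, ¬ CanOk S (ρ j).1) :
    ∀ j, j ≤ J → UWeak S P [] (ρ j).1 := by
  intro j hj
  induction j with
  | zero =>
      have hnc := hsv 0
      rw [h0] at hnc
      rw [h0]
      exact .refl hnc
  | succ j ih =>
      exact uweak_snoc_tau (ih (Nat.le_of_succ_le hj))
        (run_prefix_steps hmax hall j (Nat.lt_of_succ_le hj)) (hsv (j+1))

/-! ### Lemma ONE : client success -/

theorem one {S : CCS Act Const} :
    ∀ (s : List Act) (P X : Proc Act Const) (ρ : ℕ → Proc Act Const × Proc Act Const),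
      MaxComp S ρ → ρ 0 = (P, test S X s) →
      (∀ k, k ≤ s.length → ∀ P', Weak S P (s.take k) P' → Conv S P') →
      (∀ j, ¬ CanOk S (ρ j).2) → False := by
  intro s
  induction s with
  | nil =>
      intro P X ρ hmax h0 hres hcl
      by_cases hC : ∀ j, (ρ j).2 = test S X []
      · exact hres 0 (by simp) P (.refl P)
          ⟨fun j => (ρ j).1, by show (ρ 0).1 = _; rw [h0],
           fun j => run_prefix_steps hmax (fun i _ => hC i) j (Nat.lt_succ_self j)⟩

      · push_neg at hC
        haveI : DecidablePred fun j => (ρ j).2 ≠ test S X ([] : List Act) :=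
          fun _ => Classical.propDecidable _
        set k₁ := Nat.find hC with hk₁def
        have hne : (ρ k₁).2 ≠ test S X [] := Nat.find_spec hC
        have hlt : ∀ j, j < k₁ → (ρ j).2 = test S X [] :=
          fun j hj => not_not.mp (Nat.find_min hC hj)
        have hk1pos : k₁ ≠ 0 := by
          intro h
          exact hne (by rw [h, h0])
        obtain ⟨k₀, hk₀⟩ := Nat.exists_eq_succ_of_ne_zero hk1pos
        have hK0 : (ρ k₀).2 = test S X [] := hlt k₀ (by omega)
        rcases hmax k₀ with hstep | ⟨-, heq⟩
        · have hstep' : ParTau S ((ρ k₀).1, test S X []) (ρ (k₀+1)) := by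
            rw [← hK0]; exact hstep
          rcases parTau_inv hstep' with ⟨p', hs, heq⟩ | ⟨r', hs, heq⟩ | ⟨b, p', r', h1, h2, heq⟩
          · exact hne (by rw [hk₀, heq])
          · rcases test_step_inv hs with ⟨-, rfl⟩ | ⟨c, t', hst, -, -⟩
            · exact hcl (k₀+1) (by rw [heq]; exact canOk_ext_one)
            · cases hst
          · rcases test_step_inv h2 with ⟨hl, -⟩ | ⟨c, t', hst, -, -⟩
            · cases hl
            · cases hst
        · exact hne (by rw [hk₀, heq, hK0])
  | cons a t ih =>
      intro P X ρ hmax h0 hres hcl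
      by_cases hC : ∀ j, (ρ j).2 = test S X (a :: t)
      · exact hres 0 (by simp) P (.refl P)
          ⟨fun j => (ρ j).1, by show (ρ 0).1 = _; rw [h0],
           fun j => run_prefix_steps hmax (fun i _ => hC i) j (Nat.lt_succ_self j)⟩

      · push_neg at hC
        haveI : DecidablePred fun j => (ρ j).2 ≠ test S X (a :: t) :=
          fun _ => Classical.propDecidable _
        set k₁ := Nat.find hC with hk₁def
        have hne : (ρ k₁).2 ≠ test S X (a :: t) := Nat.find_spec hC
        have hlt : ∀ j, j < k₁ → (ρ j).2 = test S X (a :: t) :=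
          fun j hj => not_not.mp (Nat.find_min hC hj)
        have hk1pos : k₁ ≠ 0 := by
          intro h
          exact hne (by rw [h, h0])
        obtain ⟨k₀, hk₀⟩ := Nat.exists_eq_succ_of_ne_zero hk1pos
        have hK0 : (ρ k₀).2 = test S X (a :: t) := hlt k₀ (by omega)
        have hw0 : Weak S P [] (ρ k₀).1 :=
          run_prefix_weak hmax h0 (fun j hj => hlt j (by omega)) k₀ le_rfl
        rcases hmax k₀ with hstep | ⟨-, heq⟩
        · have hstep' : ParTau S ((ρ k₀).1, test S X (a :: t)) (ρ (k₀+1)) := by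
            rw [← hK0]; exact hstep
          rcases parTau_inv hstep' with ⟨p', hs, heq⟩ | ⟨r', hs, heq⟩ | ⟨b, p', r', h1, h2, heq⟩
          · exact hne (by rw [hk₀, heq])
          · rcases test_step_inv hs with ⟨-, rfl⟩ | ⟨c, t', hst, hl, -⟩
            · exact hcl (k₀+1) (by rw [heq]; exact canOk_ext_one)
            · cases hl
          · rcases test_step_inv h2 with ⟨hl, -⟩ | ⟨c, t', hst, hl, hr⟩
            · cases hl
            · cases hst
              have hba : b = a := co_inj (Label.act.inj hl)
              subst hba
              have hwa : Weak S P [b] p' := weak_snoc_act hw0 h1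
              refine ih p' (bigOplus (afterU S X [b])) (fun j => ρ ((k₀+1) + j))
                (fun j => hmax ((k₀+1) + j)) ?_ ?_ (fun j => hcl ((k₀+1) + j))
              · show ρ ((k₀+1) + 0) = _
                rw [heq, hr]
              · intro k hk P'' hw
                have : Weak S P ([b] ++ t.take k) P'' := weak_append hwa hw
                exact hres (k+1) (by simpa using hk) P'' (by simpa using this)
        · exact hne (by rw [hk₀, heq, hK0])
/-! ### Lemma TWO : server success -/

theorem two {S : CCS Act Const} :
    ∀ (s : List Act) (P X : Proc Act Const) (ρ : ℕ → Proc Act Const × Proc Act Const),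
      MaxComp S ρ → ρ 0 = (P, test S X s) →
      (∀ k, k ≤ s.length → ∀ P', Weak S P (s.take k) P' → Conv S P') →
      (∀ t' P', UWeak S P t' P' → UWeak S X t' P') →
      usbU S X s →
      (∀ j, ¬ CanOk S (ρ j).1) → False := by
  intro s
  induction s with
  | nil =>
      intro P X ρ hmax h0 hres hrel husb hsv
      by_cases hC : ∀ j, (ρ j).2 = test S X []
      · exact hres 0 (by simp) P (.refl P)
          ⟨fun j => (ρ j).1, by show (ρ 0).1 = _; rw [h0],
           fun j => run_prefix_steps hmax (fun i _ => hC i) j (Nat.lt_succ_self j)⟩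
      · push_neg at hC
        haveI : DecidablePred fun j => (ρ j).2 ≠ test S X ([] : List Act) :=
          fun _ => Classical.propDecidable _
        set k₁ := Nat.find hC with hk₁def
        have hne : (ρ k₁).2 ≠ test S X [] := Nat.find_spec hC
        have hlt : ∀ j, j < k₁ → (ρ j).2 = test S X [] :=
          fun j hj => not_not.mp (Nat.find_min hC hj)
        have hk1pos : k₁ ≠ 0 := by
          intro h
          exact hne (by rw [h, h0])
        obtain ⟨k₀, hk₀⟩ := Nat.exists_eq_succ_of_ne_zero hk1pos
        have hK0 : (ρ k₀).2 = test S X [] := hlt k₀ (by omega)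
        have huw0 : UWeak S P [] (ρ k₀).1 :=
          run_prefix_uweak hmax h0 (fun j hj => hlt j (by omega)) hsv k₀ le_rfl
        rcases hmax k₀ with hstep | ⟨-, heq⟩
        · have hstep' : ParTau S ((ρ k₀).1, test S X []) (ρ (k₀+1)) := by
            rw [← hK0]; exact hstep
          rcases parTau_inv hstep' with ⟨p', hs, heq⟩ | ⟨r', hs, heq⟩ | ⟨b, p', r', h1, h2, heq⟩
          · exact hne (by rw [hk₀, heq])
          · rcases test_step_inv hs with ⟨-, rfl⟩ | ⟨c, t', hst, -, -⟩
            · have hMust : Must S (wit S X) ((ρ k₀).1) :=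
                must_uweak_nil (hrel [] _ huw0) (wit_must husb)
              obtain ⟨j, hj⟩ := trans_lemma hMust (fun j => ρ ((k₀+1) + j))
                (fun j => hmax ((k₀+1) + j)) (by show ρ ((k₀+1) + 0) = _; rw [heq])
              exact hsv ((k₀+1) + j) hj
            · cases hst
          · rcases test_step_inv h2 with ⟨hl, -⟩ | ⟨c, t', hst, -, -⟩
            · cases hl
            · cases hst
        · exact hne (by rw [hk₀, heq, hK0])
  | cons a t ih =>
      intro P X ρ hmax h0 hres hrel husb hsv
      by_cases hC : ∀ j, (ρ j).2 = test S X (a :: t)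
      · exact hres 0 (by simp) P (.refl P)
          ⟨fun j => (ρ j).1, by show (ρ 0).1 = _; rw [h0],
           fun j => run_prefix_steps hmax (fun i _ => hC i) j (Nat.lt_succ_self j)⟩
      · push_neg at hC
        haveI : DecidablePred fun j => (ρ j).2 ≠ test S X (a :: t) :=
          fun _ => Classical.propDecidable _
        set k₁ := Nat.find hC with hk₁def
        have hne : (ρ k₁).2 ≠ test S X (a :: t) := Nat.find_spec hC
        have hlt : ∀ j, j < k₁ → (ρ j).2 = test S X (a :: t) :=
          fun j hj => not_not.mp (Nat.find_min hC hj)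
        have hk1pos : k₁ ≠ 0 := by
          intro h
          exact hne (by rw [h, h0])
        obtain ⟨k₀, hk₀⟩ := Nat.exists_eq_succ_of_ne_zero hk1pos
        have hK0 : (ρ k₀).2 = test S X (a :: t) := hlt k₀ (by omega)
        have huw0 : UWeak S P [] (ρ k₀).1 :=
          run_prefix_uweak hmax h0 (fun j hj => hlt j (by omega)) hsv k₀ le_rfl
        rcases hmax k₀ with hstep | ⟨-, heq⟩
        · have hstep' : ParTau S ((ρ k₀).1, test S X (a :: t)) (ρ (k₀+1)) := by
            rw [← hK0]; exact hstep
          rcases parTau_inv hstep' with ⟨p', hs, heq⟩ | ⟨r', hs, heq⟩ | ⟨b, p', r', h1, h2, heq⟩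
          · exact hne (by rw [hk₀, heq])
          · rcases test_step_inv hs with ⟨-, rfl⟩ | ⟨c, t', hst, hl, -⟩
            · have hMust : Must S (wit S X) ((ρ k₀).1) :=
                must_uweak_nil (hrel [] _ huw0) (wit_must husb.1)
              obtain ⟨j, hj⟩ := trans_lemma hMust (fun j => ρ ((k₀+1) + j))
                (fun j => hmax ((k₀+1) + j)) (by show ρ ((k₀+1) + 0) = _; rw [heq])
              exact hsv ((k₀+1) + j) hj
            · cases hl
          · rcases test_step_inv h2 with ⟨hl, -⟩ | ⟨c, t', hst, hl, hr⟩
            · cases hl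
            · cases hst
              have hba : b = a := co_inj (Label.act.inj hl)
              subst hba
              have hncp' : ¬ CanOk S p' := by
                have := hsv (k₀+1)
                rw [heq] at this
                exact this
              have huwa : UWeak S P [b] p' := by
                simpa using uweak_snoc_act huw0 h1 hncp'
              have hXa : UWeak S X [b] p' := hrel [b] p' huwa
              refine ih p' (bigOplus (afterU S X [b])) (fun j => ρ ((k₀+1) + j))
                (fun j => hmax ((k₀+1) + j)) ?_ ?_ ?_ (husb.2 ⟨p', hXa⟩)
                (fun j => hsv ((k₀+1) + j))
              · show ρ ((k₀+1) + 0) = _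
                rw [heq, hr]
              · intro k hk P'' hw
                have : Weak S P ([b] ++ t.take k) P'' :=
                  weak_append (uweak_to_weak huwa) hw
                exact hres (k+1) (by simpa using hk) P'' (by simpa using this)
              · intro t' P'' h
                have h2 : UWeak S X (b :: t') P'' := hrel _ _ (uweak_append huwa h)
                obtain ⟨y, hy1, hy2⟩ := uweak_cons_inv h2 b t' rfl
                exact .tau notCanOk_bigOplus
                  (bigOplus_mem_step (exists_range_afterU ⟨y, hy1⟩) hy1) hy2
        · exact hne (by rw [hk₀, heq, hK0])
/-! ### Replaying a weak transition of the server against the test client -/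

theorem replay {S : CCS Act Const} {q : Proc Act Const} {u : List Act} {q' : Proc Act Const}
    (h : Weak S q u q') : ∀ (X : Proc Act Const) (v : List Act),
    ∃ (m : ℕ) (π : ℕ → Proc Act Const × Proc Act Const),
      π 0 = (q, test S X (u ++ v)) ∧ (∀ j, j < m → ParTau S (π j) (π (j+1))) ∧
      (∃ Y, π m = (q', test S Y v)) ∧ (∀ j, j ≤ m → ∃ Z w, (π j).2 = test S Z w) := by
  induction h with
  | refl p =>
      intro X v
      exact ⟨0, fun _ => (p, test S X v), rfl, by omega, ⟨X, rfl⟩, fun j _ => ⟨X, v, rfl⟩⟩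
  | @tau p p' q0 s0 hs hw ih =>
      intro X v
      obtain ⟨m, π, h0, hsteps, hY, hforms⟩ := ih X v
      refine ⟨m+1, fun j => match j with | 0 => (p, test S X (s0 ++ v)) | j+1 => π j,
        rfl, ?_, hY, ?_⟩
      · intro j hj
        match j with
        | 0 =>
            show ParTau S (p, test S X (s0 ++ v)) (π 0)
            rw [h0]
            exact ParTau.left hs
        | j+1 => exact hsteps j (by omega)
      · intro j hj
        match j with
        | 0 => exact ⟨X, s0 ++ v, rfl⟩
        | j+1 => exact hforms j (by omega)
  | @act p p' q0 a s0 hs hw ih =>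
      intro X v
      obtain ⟨m, π, h0, hsteps, hY, hforms⟩ := ih (bigOplus (afterU S X [a])) v
      have hclient : Step S (test S X (a :: (s0 ++ v))) (.act (S.co a))
          (test S (bigOplus (afterU S X [a])) (s0 ++ v)) := by
        rw [test]
        exact step_ext_right (Step.preAct _ _)
      refine ⟨m+1, fun j => match j with | 0 => (p, test S X (a :: (s0 ++ v))) | j+1 => π j,
        rfl, ?_, hY, ?_⟩
      · intro j hj
        match j with
        | 0 =>
            show ParTau S (p, test S X (a :: (s0 ++ v))) (π 0)
            rw [h0]
            exact ParTau.sync hs hclient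
        | j+1 => exact hsteps j (by omega)
      · intro j hj
        match j with
        | 0 => exact ⟨X, a :: (s0 ++ v), rfl⟩
        | j+1 => exact hforms j (by omega)
end Aux
end MTP

/-- Corollary 5.7: the peer preorder preserves convergence along traces. -/
theorem p2pLe_conv_along {Act Const : Type} (S : MTP.CCS Act Const)
    (p q : MTP.Proc Act Const) (s : List Act)
    (hLe : MTP.p2pLe S p q)
    (hConv : MTP.convP S p s) :
    MTP.convAlong S q s := by
  obtain ⟨hca, hub⟩ := hConv
  have hres := MTP.Aux.lemA s p hca
  have hM : MTP.MustSC S p (MTP.Aux.test S p s) := by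
    intro ρ h0 hmax
    constructor
    · by_contra hc
      push_neg at hc
      exact MTP.Aux.one s p p ρ hmax h0 hres hc
    · by_contra hc
      push_neg at hc
      exact MTP.Aux.two s p p ρ hmax h0 hres (fun _ _ h => h) hub hc
  have hQ := hLe _ hM
  refine MTP.Aux.lemB s q ?_
  intro k hk q' hw
  by_contra hdiv
  rw [MTP.Conv, not_not] at hdiv
  obtain ⟨δ, hδ0, hδ⟩ := hdiv
  obtain ⟨m, π, hπ0, hsteps, ⟨Y, hπm⟩, hforms⟩ := MTP.Aux.replay hw p (s.drop k)
  rw [List.take_append_drop] at hπ0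
  set CY := MTP.Aux.test S Y (s.drop k) with hCY
  set ρ : ℕ → MTP.Proc Act Const × MTP.Proc Act Const :=
    fun j => if j < m then π j else (δ (j - m), CY) with hρ
  have hbd : (δ 0, CY) = π m := by rw [hδ0, hπm]
  have hρge : ∀ j, m ≤ j → ρ j = (δ (j - m), CY) := by
    intro j hj
    simp [hρ, Nat.not_lt.mpr hj]
  have hρlt : ∀ j, j < m → ρ j = π j := by
    intro j hj
    simp [hρ, hj]
  have hρpi : ∀ j, j ≤ m → ρ j = π j := by
    intro j hj
    rcases Nat.lt_or_ge j m with h | h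
    · exact hρlt j h
    · have hjm : j = m := le_antisymm hj h
      rw [hρge j h, hjm, Nat.sub_self, hbd]
  have h0 : ρ 0 = (q, MTP.Aux.test S p s) := by
    rw [hρpi 0 (Nat.zero_le m), hπ0]
  have hmax : MTP.MaxComp S ρ := by
    intro j
    left
    rcases Nat.lt_or_ge j m with h | h
    · rw [hρlt j h, hρpi (j+1) h]
      exact hsteps j h
    · rw [hρge j h, hρge (j+1) (by omega)]
      have : j + 1 - m = (j - m) + 1 := by omega
      rw [this]
      exact MTP.ParTau.left (hδ (j - m))
  obtain ⟨k', hok⟩ := (hQ ρ h0 hmax).1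
  rcases Nat.lt_or_ge k' m with h | h
  · obtain ⟨Z, w, hzw⟩ := hforms k' h.le
    rw [hρlt k' h, hzw] at hok
    exact MTP.Aux.notCanOk_test hok
  · rw [hρge k' h] at hok
    exact MTP.Aux.notCanOk_test hok
end
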